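/- For every n ≥ 1 there exists a run u (over two threads t1,t2 and a single variable x, consisting of 2n blocks w(x)·r(x), n per thread) such that the ≡_M-equivalence class of u is the singleton {u}, while the ≡_B-equivalence class of u has cardinality (2n)!/(n!·n!); in particular the ≡_B-class is exponentially larger than the ≡_M-class. -/

import Mathlib

namespace TraceTheory

inductive Op : Type
  | rd : Op
  | wr : Op
deriving DecidableEq

structure Lbl (T X : Type) : Type where
  thread : T
  op : Op
  var : X
deriving DecidableEq

/-- A concurrent program run: a finite string over the concurrent alphabet. -/
abbrev Run (T X : Type) := List (Lbl T X)

/-- An event of a run: a symbol together with its occurrence number. -/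
abbrev Event (T X : Type) := Lbl T X × ℕ

variable {T X : Type} [DecidableEq T] [DecidableEq X]

/-- Dependence: same thread, or same variable with at least one write. -/
def Dep (a b : Lbl T X) : Prop :=
  a.thread = b.thread ∨ (a.var = b.var ∧ (a.op = Op.wr ∨ b.op = Op.wr))

/-- The event at position `i` of run `w`. -/
def evAt (w : Run T X) (i : Fin w.length) : Event T X :=
  (w.get i, (w.take (i : ℕ)).count (w.get i))

def HasEv (w : Run T X) (e : Event T X) : Prop := ∃ i : Fin w.length, evAt w i = e

/-- `e` occurs (strictly) before `f` in `w`. -/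
def EvBefore (w : Run T X) (e f : Event T X) : Prop :=
  ∃ i j : Fin w.length, (i : ℕ) < (j : ℕ) ∧ evAt w i = e ∧ evAt w j = f

/-- Program order. -/
def po (w : Run T X) (e f : Event T X) : Prop :=
  e.1.thread = f.1.thread ∧ EvBefore w e f

/-- Reads-from: `f` is a read that observes the write `e` (the last write on
the same variable before `f`). -/
def rf (w : Run T X) (e f : Event T X) : Prop :=
  e.1.op = Op.wr ∧ f.1.op = Op.rd ∧ e.1.var = f.1.var ∧
  ∃ i j : Fin w.length, evAt w i = e ∧ evAt w j = f ∧ (i : ℕ) < (j : ℕ) ∧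
    ∀ k : Fin w.length, (i : ℕ) < (k : ℕ) → (k : ℕ) < (j : ℕ) →
      ¬ ((w.get k).op = Op.wr ∧ (w.get k).var = f.1.var)

/-- Every read is preceded by a write on the same variable. -/
def WellFormed (w : Run T X) : Prop :=
  ∀ j : Fin w.length, (w.get j).op = Op.rd →
    ∃ i : Fin w.length, (i : ℕ) < (j : ℕ) ∧ (w.get i).op = Op.wr ∧
      (w.get i).var = (w.get j).var

/-- Reads-from equivalence. -/
def RfEquiv (w w' : Run T X) : Prop :=
  w.Perm w' ∧ po w = po w' ∧ rf w = rf w'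

/-- A single Mazurkiewicz swap of two adjacent independent symbols. -/
inductive MazSwap : Run T X → Run T X → Prop
  | swap (u v : Run T X) (a b : Lbl T X) (h : ¬ Dep a b) :
      MazSwap (u ++ a :: b :: v) (u ++ b :: a :: v)

/-- Trace (Mazurkiewicz) equivalence: the smallest equivalence closed under swaps. -/
def MazEquiv (w w' : Run T X) : Prop := Relation.EqvGen MazSwap w w'

/-- The trace (happens-before) partial order of a run. -/
def MazOrder (w : Run T X) : Event T X → Event T X → Prop :=
  Relation.TransGen (fun e f => EvBefore w e f ∧ Dep e.1 f.1)

/-- `B` is a block word (one write followed by reads of the same variable) that is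
valid as a contiguous segment whose suffix (remainder of the run) is `s`:
no read after the block reads from the block's write. -/
def ValidBlockSeg (B s : Run T X) : Prop :=
  ∃ a rest, B = a :: rest ∧ a.op = Op.wr ∧
    (∀ b ∈ rest, b.op = Op.rd ∧ b.var = a.var) ∧
    ∀ j : Fin s.length, (s.get j).op = Op.rd → (s.get j).var = a.var →
      ∃ m : Fin s.length, (m : ℕ) < (j : ℕ) ∧ (s.get m).op = Op.wr ∧
        (s.get m).var = a.var

def ThreadsDisjoint (B B' : Run T X) : Prop :=
  ∀ a ∈ B, ∀ b ∈ B', a.thread ≠ b.thread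

/-- A single block-equivalence step (clause (i): block swap, clause (ii): event swap). -/
inductive BlkSwap : Run T X → Run T X → Prop
  | block (p B B' s : Run T X) (hB : ValidBlockSeg B (B' ++ s)) (hB' : ValidBlockSeg B' s)
      (hd : ThreadsDisjoint B B') :
      BlkSwap (p ++ B ++ B' ++ s) (p ++ B' ++ B ++ s)
  | single (p s : Run T X) (a b : Lbl T X) (ht : a.thread ≠ b.thread)
      (h : a.var ≠ b.var ∨ (a.op = Op.rd ∧ b.op = Op.rd)) :
      BlkSwap (p ++ a :: b :: s) (p ++ b :: a :: s)

/-- Block equivalence: smallest reflexive transitive relation closed under the swaps. -/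
def BlkEquiv : Run T X → Run T X → Prop := Relation.ReflTransGen BlkSwap

/-- The set of events of the segment `B` of a run, given the prefix `p` preceding it. -/
def segEvents (p B : Run T X) : Set (Event T X) :=
  { e | ∃ i : Fin B.length, e = (B.get i, ((p ++ B.take (i : ℕ)).count (B.get i))) }

/-- Block-equivalence steps where block swaps are restricted to blocks from `𝔹`. -/
inductive BlkSwapIn (𝔹 : Set (Set (Event T X))) : Run T X → Run T X → Prop
  | block (p B B' s : Run T X) (hB : ValidBlockSeg B (B' ++ s)) (hB' : ValidBlockSeg B' s)
      (hBmem : segEvents p B ∈ 𝔹) (hB'mem : segEvents (p ++ B) B' ∈ 𝔹)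
      (hd : ThreadsDisjoint B B') :
      BlkSwapIn 𝔹 (p ++ B ++ B' ++ s) (p ++ B' ++ B ++ s)
  | single (p s : Run T X) (a b : Lbl T X) (ht : a.thread ≠ b.thread)
      (h : a.var ≠ b.var ∨ (a.op = Op.rd ∧ b.op = Op.rd)) :
      BlkSwapIn 𝔹 (p ++ a :: b :: s) (p ++ b :: a :: s)

/-- Block equivalence restricted to the set of blocks `𝔹`. -/
def BlkEquivIn (𝔹 : Set (Set (Event T X))) : Run T X → Run T X → Prop :=
  Relation.ReflTransGen (BlkSwapIn 𝔹)

/-- A valid block of `w` (as a set of events): a write event together with exactly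
the reads of `w` that read from it. -/
def IsValidBlockOf (w : Run T X) (S : Set (Event T X)) : Prop :=
  ∃ e : Event T X, HasEv w e ∧ e.1.op = Op.wr ∧ S = insert e { f | rf w e f }

def ValidBlocks (w : Run T X) (𝔹 : Set (Set (Event T X))) : Prop :=
  ∀ S ∈ 𝔹, IsValidBlockOf w S

/-- Block `S` occurs as a contiguous subword of `u`. -/
def SerialIn (u : Run T X) (S : Set (Event T X)) : Prop :=
  ∃ p B s, u = p ++ B ++ s ∧ segEvents p B = S

/-- Liberal atomicity of a run `v` with respect to a set of blocks `𝔹`. -/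
def LiberallyAtomic (v : Run T X) (𝔹 : Set (Set (Event T X))) : Prop :=
  ∃ u, BlkEquivIn 𝔹 u v ∧ ∀ S ∈ 𝔹, SerialIn u S

/-- Conflict serializability of a run `v` with respect to a set of blocks `𝔹`. -/
def ConflictSerializable (v : Run T X) (𝔹 : Set (Set (Event T X))) : Prop :=
  ∃ u, MazEquiv u v ∧ ∀ S ∈ 𝔹, SerialIn u S

/-- The block-happens-before order `≺_𝔹`. -/
def Bhb (w : Run T X) (𝔹 : Set (Set (Event T X))) : Event T X → Event T X → Prop :=
  Relation.TransGen (fun e f =>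
    EvBefore w e f ∧ Dep e.1 f.1 ∧
    ¬ (e.1.thread ≠ f.1.thread ∧ ∃ B ∈ 𝔹, ∃ B' ∈ 𝔹, B ≠ B' ∧ e ∈ B ∧ f ∈ B'))

/-- The saturated order `⪻_𝔹` on events (`Sum.inl`) and blocks (`Sum.inr`). -/
inductive Sat (w : Run T X) (𝔹 : Set (Set (Event T X))) :
    (Event T X ⊕ Set (Event T X)) → (Event T X ⊕ Set (Event T X)) → Prop
  | base {e f : Event T X} : Bhb w 𝔹 e f → Sat w 𝔹 (Sum.inl e) (Sum.inl f)
  | toBlk {e f : Event T X} {B B' : Set (Event T X)} :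
      e.1.var = f.1.var → B ∈ 𝔹 → B' ∈ 𝔹 → e ∈ B → f ∈ B' → B ≠ B' →
      Sat w 𝔹 (Sum.inl e) (Sum.inl f) → Sat w 𝔹 (Sum.inr B) (Sum.inr B')
  | ofBlk {B B' : Set (Event T X)} {e f : Event T X} :
      Sat w 𝔹 (Sum.inr B) (Sum.inr B') → e ∈ B → f ∈ B' →
      Sat w 𝔹 (Sum.inl e) (Sum.inl f)

/-- The event part of the saturated order `⪻_𝔹`. -/
def SatEv (w : Run T X) (𝔹 : Set (Set (Event T X))) (e f : Event T X) : Prop :=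
  Sat w 𝔹 (Sum.inl e) (Sum.inl f)

def SameVarBlocks (B B' : Set (Event T X)) : Prop :=
  ∃ x : X, (∀ e ∈ B, e.1.var = x) ∧ (∀ e ∈ B', e.1.var = x)

/-- No two distinct blocks of `𝔹` on the same variable overlap in `v`. -/
def NoOverlap (v : Run T X) (𝔹 : Set (Set (Event T X))) : Prop :=
  ∀ B ∈ 𝔹, ∀ B' ∈ 𝔹, B ≠ B' → SameVarBlocks B B' →
    (∀ e ∈ B, ∀ f ∈ B', EvBefore v e f) ∨ (∀ e ∈ B, ∀ f ∈ B', EvBefore v f e)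

/-- `v` is a proper linearization (of the events of `w`) of the order `ord`. -/
def ProperLin (w : Run T X) (𝔹 : Set (Set (Event T X)))
    (ord : Event T X → Event T X → Prop) (v : Run T X) : Prop :=
  w.Perm v ∧ (∀ e f, ord e f → EvBefore v e f) ∧ NoOverlap v 𝔹


/-- `e` is causally ordered before `f` under reads-from equivalence:
`e` occurs before `f` in every reads-from equivalent run. -/
def CausOrd (w : Run T X) (e f : Event T X) : Prop :=
  ∀ w', RfEquiv w w' → EvBefore w' e f

/-- `e` and `f` are causally concurrent under reads-from equivalence. -/
def CausConc (w : Run T X) (e f : Event T X) : Prop :=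
  ¬ CausOrd w e f ∧ ¬ CausOrd w f e

set_option linter.unusedSectionVars false
set_option maxHeartbeats 1000000

section BlockAux
variable (t1 t2 : T) (x : X)

def lw (b : Bool) : Lbl T X := ⟨if b then t1 else t2, Op.wr, x⟩
def lr (b : Bool) : Lbl T X := ⟨if b then t1 else t2, Op.rd, x⟩
def blkL (b : Bool) : Run T X := [lw t1 t2 x b, lr t1 t2 x b]
def sh (c : List Bool) : Run T X := (c.map (blkL t1 t2 x)).flatten

lemma sh_nil : sh t1 t2 x [] = [] := rfl
lemma sh_cons (b : Bool) (c : List Bool) :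
    sh t1 t2 x (b :: c) = lw t1 t2 x b :: lr t1 t2 x b :: sh t1 t2 x c := rfl
lemma sh_append (c d : List Bool) :
    sh t1 t2 x (c ++ d) = sh t1 t2 x c ++ sh t1 t2 x d := by simp [sh]

lemma length_sh (c : List Bool) : (sh t1 t2 x c).length = 2 * c.length := by
  induction c with
  | nil => rfl
  | cons b c ih => rw [sh_cons]; simp only [List.length_cons, ih]; omega

lemma sh_get (c : List Bool) (i : ℕ) (h : i < (sh t1 t2 x c).length) (h2 : i / 2 < c.length) :
    (sh t1 t2 x c)[i] = ⟨if c.getD (i/2) false then t1 else t2,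
      if i % 2 = 0 then Op.wr else Op.rd, x⟩ := by
  induction c generalizing i with
  | nil => simp [sh_nil] at h
  | cons b c ih =>
    simp only [sh_cons] at h ⊢
    match i with
    | 0 => simp [lw]
    | 1 => simp [lr]
    | (i+2) =>
      have e1 : (i+2)/2 = i/2 + 1 := by omega
      have e2 : (i+2) % 2 = i % 2 := by omega
      simp only [List.getElem_cons_succ, e1, e2]
      rw [ih i (by simpa using h) (by simp at h2 ⊢; omega)]
      simp

lemma sh_take (c : List Bool) (k : ℕ) :
    (sh t1 t2 x c).take (2 * k) = sh t1 t2 x (c.take k) := by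
  induction c generalizing k with
  | nil => simp [sh_nil]
  | cons b c ih =>
    match k with
    | 0 => simp [sh_nil]
    | (k+1) =>
      rw [sh_cons, List.take_cons (by omega), show 2*(k+1)-1 = 2*k+1 by omega,
        List.take_cons (by omega)]
      simp only [List.take_succ_cons, sh_cons]
      rw [show 2*k+1-1 = 2*k by omega, ih]

lemma sh_drop (c : List Bool) (k : ℕ) :
    (sh t1 t2 x c).drop (2 * k) = sh t1 t2 x (c.drop k) := by
  induction c generalizing k with
  | nil => simp [sh_nil]
  | cons b c ih =>
    match k with
    | 0 => simp
    | (k+1) =>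
      rw [sh_cons, show 2*(k+1) = (2*k)+1+1 by omega]
      simp only [List.drop_succ_cons]
      exact ih k

end BlockAux

lemma getElem_append_mid {α : Type*} (p q s : List α) (i : ℕ) (hi : i < q.length)
    (hb : p.length + i < (p ++ q ++ s).length) : (p ++ q ++ s)[p.length + i] = q[i] := by
  simp only [List.append_assoc] at hb ⊢
  simp only [List.getElem_append, Nat.add_sub_cancel_left]
  rw [dif_neg (by omega), dif_pos hi]

lemma getElem_decomp {α : Type*} {v p q s : List α} (he : v = p ++ q ++ s) {i : ℕ}
    (hi : i < q.length) :
    ∃ hb : p.length + i < v.length, v[p.length + i]'hb = q[i] := by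
  subst he
  exact ⟨by simp; omega, getElem_append_mid p q s i hi _⟩

section MazPart
variable (t1 t2 : T) (x : X)

lemma dep_symm {a b : Lbl T X} (h : Dep a b) : Dep b a := by
  rcases h with h | ⟨h1, h2⟩
  · exact Or.inl h.symm
  · exact Or.inr ⟨h1.symm, h2.symm⟩

lemma sh_adj_dep (c : List Bool) (p s : Run T X) (a b : Lbl T X)
    (h : sh t1 t2 x c = p ++ a :: b :: s) : Dep a b := by
  have hq : sh t1 t2 x c = p ++ [a, b] ++ s := by simpa using h
  obtain ⟨hb1, e1⟩ := getElem_decomp hq (i := 0) (by simp)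
  obtain ⟨hb2, e2⟩ := getElem_decomp hq (i := 1) (by simp)
  have hL := length_sh t1 t2 x c
  have g1 := sh_get t1 t2 x c (p.length + 0) hb1 (by omega)
  have g2 := sh_get t1 t2 x c (p.length + 1) hb2 (by omega)
  simp only [List.getElem_cons_zero, List.getElem_cons_succ] at e1 e2
  have hav : a.var = x := by rw [← e1, g1]
  have hbv : b.var = x := by rw [← e2, g2]
  have hao : a.op = if (p.length + 0) % 2 = 0 then Op.wr else Op.rd := by rw [← e1, g1]
  have hbo : b.op = if (p.length + 1) % 2 = 0 then Op.wr else Op.rd := by rw [← e2, g2]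
  right
  refine ⟨by rw [hav, hbv], ?_⟩
  by_cases h0 : p.length % 2 = 0
  · left; rw [hao, if_pos (by omega)]
  · right; rw [hbo, if_pos (by omega)]

lemma no_mazswap_from (c : List Bool) (w : Run T X) : ¬ MazSwap (sh t1 t2 x c) w := by
  intro h
  generalize hv : sh t1 t2 x c = v0 at h
  cases h with
  | swap u v a b hnd => exact hnd (sh_adj_dep t1 t2 x c u v a b hv)

lemma no_mazswap_to (c : List Bool) (w : Run T X) : ¬ MazSwap w (sh t1 t2 x c) := by
  intro h
  generalize hv : sh t1 t2 x c = v0 at h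
  cases h with
  | swap u v a b hnd => exact hnd (dep_symm (sh_adj_dep t1 t2 x c u v b a hv))

lemma maz_class (c : List Bool) :
    {v | MazEquiv (sh t1 t2 x c) v} = {sh t1 t2 x c} := by
  ext v
  simp only [Set.mem_setOf_eq, Set.mem_singleton_iff]
  constructor
  · intro h
    have key : ∀ a b : Run T X, Relation.EqvGen MazSwap a b →
        (a = sh t1 t2 x c ↔ b = sh t1 t2 x c) := by
      intro a b hab
      induction hab with
      | rel a b hr =>
        constructor
        · intro e; exact absurd (e ▸ hr) (no_mazswap_from t1 t2 x c _)
        · intro e; exact absurd (e ▸ hr) (no_mazswap_to t1 t2 x c _)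
      | refl => exact Iff.rfl
      | symm _ _ _ ih => exact ih.symm
      | trans _ _ _ _ _ ih1 ih2 => exact ih1.trans ih2
    exact (key _ _ h).mp rfl
  · rintro rfl; exact Relation.EqvGen.refl _

end MazPart

section BlkForward
variable (t1 t2 : T) (x : X)

lemma validBlockSeg_sh (b : Bool) (c : List Bool) :
    ValidBlockSeg (blkL t1 t2 x b) (sh t1 t2 x c) := by
  refine ⟨lw t1 t2 x b, [lr t1 t2 x b], rfl, rfl, ?_, ?_⟩
  · intro e he
    simp only [List.mem_singleton] at he
    subst he
    exact ⟨rfl, rfl⟩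
  · intro j h1 h2
    have hL := length_sh t1 t2 x c
    have hj := j.isLt
    have g := sh_get t1 t2 x c j hj (by omega)
    simp only [List.get_eq_getElem] at h1 h2 ⊢
    rw [g] at h1
    have h1' : (if (j : ℕ) % 2 = 0 then Op.wr else Op.rd) = Op.rd := h1
    have hodd : (j : ℕ) % 2 = 1 := by
      by_contra h0
      rw [if_pos (by omega)] at h1'
      exact Op.noConfusion h1'
    refine ⟨⟨(j : ℕ) - 1, by omega⟩, ?_, ?_, ?_⟩
    · show (j : ℕ) - 1 < (j : ℕ); omega
    · rw [sh_get t1 t2 x c ((j : ℕ) - 1) (by omega) (by omega)]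
      show (if ((j : ℕ) - 1) % 2 = 0 then Op.wr else Op.rd) = Op.wr
      rw [if_pos (by omega)]
    · rw [sh_get t1 t2 x c ((j : ℕ) - 1) (by omega) (by omega)]
      rfl

lemma blkSwap_prepend {v w : Run T X} (q : Run T X) (h : BlkSwap v w) :
    BlkSwap (q ++ v) (q ++ w) := by
  cases h with
  | block p B B' s hB hB' hd =>
    have := BlkSwap.block (q ++ p) B B' s hB hB' hd
    simpa [List.append_assoc] using this
  | single p s a b ht h =>
    have := BlkSwap.single (q ++ p) s a b ht h
    simpa [List.append_assoc] using this

lemma blkEquiv_prepend (q : Run T X) {v w : Run T X} (h : BlkEquiv v w) :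
    BlkEquiv (q ++ v) (q ++ w) :=
  h.lift (fun l => q ++ l) (fun _ _ hr => blkSwap_prepend q hr)

lemma blkSwap_swap_heads (ht : t1 ≠ t2) (a b : Bool) (hab : a ≠ b) (c : List Bool) :
    BlkSwap (sh t1 t2 x (a :: b :: c)) (sh t1 t2 x (b :: a :: c)) := by
  have hd : ThreadsDisjoint (blkL t1 t2 x a) (blkL t1 t2 x b) := by
    intro e he f hf
    simp only [blkL, List.mem_cons, List.mem_singleton, List.not_mem_nil, or_false] at he hf
    rcases he with rfl | rfl <;> rcases hf with rfl | rfl <;>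
      cases a <;> cases b <;> simp_all [lw, lr] <;> exact fun h => ht h.symm
  have h1 : ValidBlockSeg (blkL t1 t2 x a) (blkL t1 t2 x b ++ sh t1 t2 x c) :=
    validBlockSeg_sh t1 t2 x a (b :: c)
  have h2 : ValidBlockSeg (blkL t1 t2 x b) (sh t1 t2 x c) := validBlockSeg_sh t1 t2 x b c
  have := BlkSwap.block [] (blkL t1 t2 x a) (blkL t1 t2 x b) (sh t1 t2 x c) h1 h2 hd
  simpa [sh_cons, blkL, List.append_assoc] using this

lemma perm_blkEquiv (ht : t1 ≠ t2) {c c' : List Bool} (h : c.Perm c') :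
    BlkEquiv (sh t1 t2 x c) (sh t1 t2 x c') := by
  induction h with
  | nil => exact Relation.ReflTransGen.refl
  | cons b h ih => exact blkEquiv_prepend (blkL t1 t2 x b) ih
  | swap a b l =>
    by_cases hab : a = b
    · subst hab; exact Relation.ReflTransGen.refl
    · exact Relation.ReflTransGen.single
        (blkSwap_swap_heads t1 t2 x ht b a (fun e => hab e.symm) l)
  | trans _ _ ih1 ih2 => exact ih1.trans ih2

end BlkForward

lemma getElem_decomp' {α : Type*} {v p q s : List α} (he : v = p ++ q ++ s) {i : ℕ}
    (hi : i < q.length) {j : ℕ} (hj : j = p.length + i) :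
    ∃ hb : j < v.length, v[j]'hb = q[i] := by
  subst hj; exact getElem_decomp he hi

lemma sh_cons' (t1 t2 : T) (x : X) (b : Bool) (c : List Bool) :
    sh t1 t2 x (b :: c) = blkL t1 t2 x b ++ sh t1 t2 x c := rfl

section BlkInv
variable (t1 t2 : T) (x : X)

lemma blk_step_perm {c : List Bool} {w : Run T X} (hs : BlkSwap (sh t1 t2 x c) w) :
    ∃ c' : List Bool, c.Perm c' ∧ w = sh t1 t2 x c' := by
  have hLc := length_sh t1 t2 x c
  generalize hv : sh t1 t2 x c = v0 at hs
  cases hs with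
  | single p s a b htt hop =>
    exfalso
    have hq : sh t1 t2 x c = p ++ [a, b] ++ s := by simpa using hv
    obtain ⟨hb1, e1⟩ := getElem_decomp' hq (i := 0) (by simp) (j := p.length) (by omega)
    obtain ⟨hb2, e2⟩ := getElem_decomp' hq (i := 1) (by simp) (j := p.length + 1) rfl
    have g1 := sh_get t1 t2 x c p.length hb1 (by omega)
    have g2 := sh_get t1 t2 x c (p.length + 1) hb2 (by omega)
    simp only [List.getElem_cons_zero, List.getElem_cons_succ] at e1 e2
    have hav : a.var = x := by rw [← e1, g1]
    have hbv : b.var = x := by rw [← e2, g2]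
    have hao : a.op = if p.length % 2 = 0 then Op.wr else Op.rd := by rw [← e1, g1]
    have hbo : b.op = if (p.length + 1) % 2 = 0 then Op.wr else Op.rd := by rw [← e2, g2]
    rcases hop with hne | ⟨ha, hb⟩
    · exact hne (hav.trans hbv.symm)
    · rw [ha] at hao; rw [hb] at hbo
      by_cases h0 : p.length % 2 = 0
      · rw [if_pos h0] at hao; exact Op.noConfusion hao
      · rw [if_pos (by omega)] at hbo; exact Op.noConfusion hbo
  | block p B B' s hB hB' hd =>
    obtain ⟨a, rest, hBa, haw, hrest, hvalB⟩ := hB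
    obtain ⟨a', rest', hB'a, ha'w, hrest', hvalB'⟩ := hB'
    subst hBa hB'a
    have hq1 : sh t1 t2 x c = p ++ (a :: rest) ++ ((a' :: rest') ++ s) := by
      simpa [List.append_assoc] using hv
    have hlen : 2 * c.length =
        p.length + (rest.length + 1) + (rest'.length + 1) + s.length := by
      have := congrArg List.length hv
      rw [hLc] at this; simp at this; omega
    obtain ⟨hb0, e0⟩ := getElem_decomp' hq1 (i := 0) (by simp) (j := p.length) (by omega)
    have g0 := sh_get t1 t2 x c p.length hb0 (by omega)
    simp only [List.getElem_cons_zero] at e0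
    have hpl : p.length % 2 = 0 := by
      by_contra h0
      have hh : a.op = if p.length % 2 = 0 then Op.wr else Op.rd := by rw [← e0, g0]
      rw [haw, if_neg h0] at hh
      exact Op.noConfusion hh
    -- rest has length ≤ 1
    have hrest1 : rest.length ≤ 1 := by
      by_contra h2
      obtain ⟨hb2, e2⟩ := getElem_decomp' hq1 (i := 2) (by simp; omega)
        (j := p.length + 2) rfl
      have g2 := sh_get t1 t2 x c (p.length + 2) hb2 (by omega)
      simp only [List.getElem_cons_succ] at e2
      have hmem : rest[1]'(by omega) ∈ rest := List.getElem_mem _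
      have hh : (rest[1]'(by omega)).op = if (p.length + 2) % 2 = 0 then Op.wr else Op.rd := by
        rw [← e2, g2]
      rw [(hrest _ hmem).1, if_pos (by omega)] at hh
      exact Op.noConfusion hh
    -- rest is nonempty
    have hrestne : rest ≠ [] := by
      intro h0; subst h0
      have hq2 : sh t1 t2 x c = (p ++ [a]) ++ (a' :: rest') ++ s := by
        simpa [List.append_assoc] using hv
      obtain ⟨hb1, e1⟩ := getElem_decomp' hq2 (i := 0) (by simp)
        (j := p.length + 1) (by simp)
      have g1 := sh_get t1 t2 x c (p.length + 1) hb1 (by omega)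
      simp only [List.getElem_cons_zero] at e1
      have hh : a'.op = if (p.length + 1) % 2 = 0 then Op.wr else Op.rd := by rw [← e1, g1]
      rw [ha'w, if_neg (by omega)] at hh
      exact Op.noConfusion hh
    obtain ⟨r, hr⟩ := List.length_eq_one_iff.mp
      (by have := List.length_pos_iff.mpr hrestne; omega : rest.length = 1)
    subst hr
    -- rest' has length ≤ 1
    have hq3 : sh t1 t2 x c = (p ++ [a, r]) ++ (a' :: rest') ++ s := by
      simpa [List.append_assoc] using hv
    have hrest'1 : rest'.length ≤ 1 := by
      by_contra h2
      obtain ⟨hb4, e4⟩ := getElem_decomp' hq3 (i := 2) (by simp; omega)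
        (j := p.length + 4) (by simp)
      have g4 := sh_get t1 t2 x c (p.length + 4) hb4 (by omega)
      simp only [List.getElem_cons_succ] at e4
      have hmem : rest'[1]'(by omega) ∈ rest' := List.getElem_mem _
      have hh : (rest'[1]'(by omega)).op = if (p.length + 4) % 2 = 0 then Op.wr else Op.rd := by
        rw [← e4, g4]
      rw [(hrest' _ hmem).1, if_pos (by omega)] at hh
      exact Op.noConfusion hh
    -- a' facts
    obtain ⟨hb2, e2⟩ := getElem_decomp' hq3 (i := 0) (by simp)
      (j := p.length + 2) (by simp)
    have g2 := sh_get t1 t2 x c (p.length + 2) hb2 (by omega)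
    simp only [List.getElem_cons_zero] at e2
    have ha'v : a'.var = x := by rw [← e2, g2]
    -- rest' is nonempty
    have hrest'ne : rest' ≠ [] := by
      intro h0; subst h0
      match s, hlen with
      | [], hlen => simp at hlen; omega
      | s0 :: ss, hlen =>
        have hq4 : sh t1 t2 x c = (p ++ [a, r] ++ [a']) ++ (s0 :: ss) ++ [] := by
          simpa [List.append_assoc] using hv
        obtain ⟨hb3, e3⟩ := getElem_decomp' hq4 (i := 0) (by simp)
          (j := p.length + 3) (by simp)
        have g3 := sh_get t1 t2 x c (p.length + 3) hb3 (by omega)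
        simp only [List.getElem_cons_zero] at e3
        have hs0o : s0.op = if (p.length + 3) % 2 = 0 then Op.wr else Op.rd := by
          rw [← e3, g3]
        rw [if_neg (by omega)] at hs0o
        have hs0v : s0.var = x := by rw [← e3, g3]
        obtain ⟨m, hm, -, -⟩ := hvalB' ⟨0, by simp⟩ (by simpa using hs0o)
          (by simpa using hs0v.trans ha'v.symm)
        simp at hm
    obtain ⟨r', hr'⟩ := List.length_eq_one_iff.mp
      (by have := List.length_pos_iff.mpr hrest'ne; omega : rest'.length = 1)
    subst hr'
    -- identify the four letters
    obtain ⟨hb1, e1⟩ := getElem_decomp' hq1 (i := 1) (by simp) (j := p.length + 1) rfl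
    have g1 := sh_get t1 t2 x c (p.length + 1) hb1 (by omega)
    simp only [List.getElem_cons_succ, List.getElem_cons_zero] at e1
    obtain ⟨hb3, e3⟩ := getElem_decomp' hq3 (i := 1) (by simp) (j := p.length + 3) (by simp)
    have g3 := sh_get t1 t2 x c (p.length + 3) hb3 (by omega)
    simp only [List.getElem_cons_succ, List.getElem_cons_zero] at e3
    simp only [List.length_cons, List.length_nil, List.length_singleton] at hlen
    set k := p.length / 2 with hkdef
    have hk : k < c.length := by omega
    have hk1 : k + 1 < c.length := by omega
    have d1 : (p.length + 1) / 2 = k := by omega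
    have d2 : (p.length + 2) / 2 = k + 1 := by omega
    have d3 : (p.length + 3) / 2 = k + 1 := by omega
    have hA : (a :: [r]) = blkL t1 t2 x (c.getD k false) := by
      have ha : a = lw t1 t2 x (c.getD k false) := by
        rw [← e0, g0]; simp [lw, hpl]
      have hrr : r = lr t1 t2 x (c.getD k false) := by
        rw [← e1, g1, d1]; simp [lr, show ¬ (p.length + 1) % 2 = 0 by omega]
      rw [ha, hrr]; rfl
    have hA' : (a' :: [r']) = blkL t1 t2 x (c.getD (k+1) false) := by
      have ha' : a' = lw t1 t2 x (c.getD (k+1) false) := by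
        rw [← e2, g2, d2]; simp [lw, show (p.length + 2) % 2 = 0 by omega]
      have hrr' : r' = lr t1 t2 x (c.getD (k+1) false) := by
        rw [← e3, g3, d3]; simp [lr, show ¬ (p.length + 3) % 2 = 0 by omega]
      rw [ha', hrr']; rfl
    -- identify p and s
    have hpp : p = sh t1 t2 x (c.take k) := by
      have h1 : (sh t1 t2 x c).take p.length = p := by
        rw [hq1, List.append_assoc, List.take_left]
      rw [← h1, show p.length = 2 * k by omega, sh_take]
    have hss : s = sh t1 t2 x (c.drop (k + 2)) := by
      have h1 : (sh t1 t2 x c).drop (p.length + 4) = s := by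
        rw [show sh t1 t2 x c = (p ++ [a, r] ++ [a', r']) ++ s by
          simpa [List.append_assoc] using hv]
        rw [show p.length + 4 = (p ++ [a, r] ++ [a', r']).length by simp]
        exact List.drop_left
      rw [← h1, show p.length + 4 = 2 * (k + 2) by omega, sh_drop]
    -- the decomposition of c
    have hc : c = c.take k ++ c.getD k false :: c.getD (k+1) false :: c.drop (k + 2) := by
      conv_lhs => rw [← List.take_append_drop k c]
      congr 1
      rw [← List.getElem_cons_drop hk, ← List.getElem_cons_drop hk1,
        List.getD_eq_getElem c false hk, List.getD_eq_getElem c false hk1]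
    refine ⟨c.take k ++ c.getD (k+1) false :: c.getD k false :: c.drop (k + 2), ?_, ?_⟩
    · have hperm : (c.take k ++ c.getD k false :: c.getD (k+1) false :: c.drop (k + 2)).Perm
          (c.take k ++ c.getD (k+1) false :: c.getD k false :: c.drop (k + 2)) :=
        List.Perm.append_left _ (List.Perm.swap _ _ _)
      exact (by rw [← hc] : c.Perm _).trans hperm
    · rw [sh_append, sh_cons', sh_cons', hpp, hss, ← hA, ← hA']
      simp [List.append_assoc]

lemma blk_class (ht : t1 ≠ t2) (c0 : List Bool) :
    {v | BlkEquiv (sh t1 t2 x c0) v} = sh t1 t2 x '' {c | c0.Perm c} := by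
  ext v
  simp only [Set.mem_setOf_eq, Set.mem_image]
  constructor
  · intro h
    induction h with
    | refl => exact ⟨c0, List.Perm.refl _, rfl⟩
    | tail h1 h2 ih =>
      obtain ⟨c, hp, rfl⟩ := ih
      obtain ⟨c', hpp, hw⟩ := blk_step_perm t1 t2 x h2
      exact ⟨c', hp.trans hpp, hw.symm⟩
  · rintro ⟨c, hp, rfl⟩
    exact perm_blkEquiv t1 t2 x ht hp

end BlkInv

section Counting

lemma count_true_add_count_false (l : List Bool) :
    l.count true + l.count false = l.length := by
  induction l with
  | nil => simp
  | cons b l ih => cases b <;> simp [List.count_cons] <;> omega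

lemma card_bool_lists (L k : ℕ) :
    Set.ncard {c : List Bool | c.length = L ∧ c.count true = k} = L.choose k := by
  induction L generalizing k with
  | zero =>
    match k with
    | 0 =>
      have he : {c : List Bool | c.length = 0 ∧ c.count true = 0} = {([] : List Bool)} := by
        ext c; cases c <;> simp
      rw [he]; simp
    | (k+1) =>
      have he : {c : List Bool | c.length = 0 ∧ c.count true = k+1} = ∅ := by
        ext c; cases c <;> simp
      rw [he]; simp
  | succ L ih =>
    have hinj : ∀ b : Bool, Function.Injective (fun d : List Bool => b :: d) :=
      fun b d d' h => by injection h
    have hfin : ∀ m, {c : List Bool | c.length = L ∧ c.count true = m}.Finite :=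
      fun m => Set.Finite.subset (List.finite_length_eq Bool L) (fun c hc => hc.1)
    match k with
    | 0 =>
      have he : {c : List Bool | c.length = L+1 ∧ c.count true = 0}
          = (fun d => false :: d) '' {c : List Bool | c.length = L ∧ c.count true = 0} := by
        ext c
        cases c with
        | nil => simp
        | cons b d => cases b <;> simp [List.count_cons] <;> omega
      rw [he, Set.ncard_image_of_injective _ (hinj false), ih]
      simp
    | (k+1) =>
      have he : {c : List Bool | c.length = L+1 ∧ c.count true = k+1}
          = (fun d => true :: d) '' {c : List Bool | c.length = L ∧ c.count true = k}
            ∪ (fun d => false :: d) '' {c : List Bool | c.length = L ∧ c.count true = k+1} := by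
        ext c
        cases c with
        | nil => simp
        | cons b d => cases b <;> simp [List.count_cons] <;> omega
      have hdis : Disjoint
          ((fun d => true :: d) '' {c : List Bool | c.length = L ∧ c.count true = k})
          ((fun d => false :: d) '' {c : List Bool | c.length = L ∧ c.count true = k+1}) := by
        rw [Set.disjoint_left]
        rintro c ⟨d, _, rfl⟩ ⟨d', _, h⟩
        exact Bool.noConfusion (List.head_eq_of_cons_eq h).symm
      rw [he, Set.ncard_union_eq hdis ((hfin k).image _) ((hfin (k+1)).image _),
        Set.ncard_image_of_injective _ (hinj true), Set.ncard_image_of_injective _ (hinj false),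
        ih, ih, Nat.choose_succ_succ']

lemma two_pow_le_centralBinom (n : ℕ) : 2 ^ n ≤ Nat.centralBinom n := by
  induction n with
  | zero => simp [Nat.centralBinom]
  | succ n ih =>
    have h1 : (n+1) * (2 * Nat.centralBinom n) ≤ (n+1) * Nat.centralBinom (n+1) := by
      rw [Nat.succ_mul_centralBinom_succ]
      have := Nat.centralBinom_pos n
      nlinarith
    have h2 : 2 * Nat.centralBinom n ≤ Nat.centralBinom (n+1) :=
      Nat.le_of_mul_le_mul_left h1 (by omega)
    calc 2^(n+1) = 2 * 2^n := by ring
    _ ≤ 2 * Nat.centralBinom n := by omega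
    _ ≤ _ := h2

end Counting

section Final
variable (t1 t2 : T) (x : X)

lemma sh_injective (ht : t1 ≠ t2) : Function.Injective (sh t1 t2 x) := by
  intro c c' h
  induction c generalizing c' with
  | nil =>
    cases c' with
    | nil => rfl
    | cons b d => rw [sh_nil, sh_cons] at h; cases h
  | cons b d ih =>
    cases c' with
    | nil => rw [sh_nil, sh_cons] at h; cases h
    | cons b' d' =>
      rw [sh_cons, sh_cons] at h
      injection h with h1 h2
      injection h2 with h2 h3
      have hb : b = b' := by
        cases b <;> cases b' <;> simp_all [lw] <;> exact ht h1.1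
      subst hb
      rw [ih h3]

lemma perm_set_eq (n : ℕ) :
    {c : List Bool | (List.replicate n true ++ List.replicate n false).Perm c}
      = {c : List Bool | c.length = 2 * n ∧ c.count true = n} := by
  ext c
  simp only [Set.mem_setOf_eq]
  constructor
  · intro h
    refine ⟨by have := h.length_eq; simp at this; omega, ?_⟩
    have := (h.count_eq true).symm
    simpa [List.count_replicate] using this
  · rintro ⟨h1, h2⟩
    rw [List.perm_iff_count]
    intro a
    have hc := count_true_add_count_false c
    cases a
    · simp [List.count_replicate]; omega
    · simp [List.count_replicate]; omega

end Final


/-- for every `n ≥ 1`, the run consisting of `n` blocks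
`w(x)·r(x)` of thread `t1` followed by `n` such blocks of thread `t2` has a
singleton `≡_M`-class, while its `≡_B`-class has `(2n)!/(n!·n!)` elements;
in particular the `≡_B`-class is exponentially larger. -/
theorem block_class_exponentially_larger
    (T X : Type) [DecidableEq T] [DecidableEq X]
    (t1 t2 : T) (ht : t1 ≠ t2) (x : X) (n : ℕ) (hn : 1 ≤ n) :
    ∃ u : Run T X,
      u = (List.replicate n ([⟨t1, Op.wr, x⟩, ⟨t1, Op.rd, x⟩] : Run T X)).flatten ++
          (List.replicate n ([⟨t2, Op.wr, x⟩, ⟨t2, Op.rd, x⟩] : Run T X)).flatten ∧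
      {v | MazEquiv u v} = {u} ∧
      Set.ncard {v | BlkEquiv u v} =
        (2 * n).factorial / (n.factorial * n.factorial) ∧
      2 ^ n ≤ Set.ncard {v | BlkEquiv u v} := by
  classical
  set c0 : List Bool := List.replicate n true ++ List.replicate n false with hc0
  have hu : (List.replicate n ([⟨t1, Op.wr, x⟩, ⟨t1, Op.rd, x⟩] : Run T X)).flatten ++
      (List.replicate n ([⟨t2, Op.wr, x⟩, ⟨t2, Op.rd, x⟩] : Run T X)).flatten
        = sh t1 t2 x c0 := by
    rw [hc0]
    simp only [sh, List.map_append, List.map_replicate, List.flatten_append]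
    have e1 : blkL t1 t2 x true = ([⟨t1, Op.wr, x⟩, ⟨t1, Op.rd, x⟩] : Run T X) := by
      simp [blkL, lw, lr]
    have e2 : blkL t1 t2 x false = ([⟨t2, Op.wr, x⟩, ⟨t2, Op.rd, x⟩] : Run T X) := by
      simp [blkL, lw, lr]
    rw [e1, e2]
  have hcount : {c : List Bool | c0.Perm c} = {c : List Bool | c.length = 2 * n ∧ c.count true = n} := by
    rw [hc0]; exact perm_set_eq n
  have hclass : {v | BlkEquiv (sh t1 t2 x c0) v} = sh t1 t2 x '' {c : List Bool | c.length = 2 * n ∧ c.count true = n} := by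
    rw [blk_class t1 t2 x ht c0, hcount]
  have hncard : Set.ncard {v | BlkEquiv (sh t1 t2 x c0) v} = (2 * n).choose n := by
    rw [hclass, Set.ncard_image_of_injective _ (sh_injective t1 t2 x ht), card_bool_lists]
  refine ⟨_, rfl, ?_, ?_, ?_⟩
  · rw [hu]; exact maz_class t1 t2 x c0
  · rw [hu, hncard, Nat.choose_eq_factorial_div_factorial (by omega : n ≤ 2 * n),
      show 2 * n - n = n by omega]
  · rw [hu, hncard]
    exact two_pow_le_centralBinom n

end TraceTheory
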